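/- Let u, v, w, t, m, a, b be rational numbers with b ≠ 0, m ≠ 0, v ≠ 0, w ≠ 0 and such that the denominators below are nonzero. Define P = w(bv³ - mw³)/(v(bv³ + ((a-t)m - bu)vw + 2mw³)), Q = -bv²(bv³ + ((a-t)m - bu)vw + 2mw³)/(mw²(2bv³ + ((a-t)m - bu)vw + mw³)), R = -w(2bv³ + ((a-t)m - bu)vw + mw³)/(v(bv³ - mw³)). Then u·PQR + v·(PQ+QR+RP) + w·(P+Q+R) + t = a and m·PQR = b. -/

import Mathlib

theorem aux5 (u v w t m a b d1 d2 : ℚ) (hb : b ≠ 0) (hm : m ≠ 0) (hv : v ≠ 0) (hw : w ≠ 0)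
    (h1 : d1 ≠ 0) (h2 : d2 ≠ 0) (h3 : d1 + d2 ≠ 0)
    (e1 : d1 = b * v ^ 3 - m * w ^ 3)
    (e2 : d2 = b * v ^ 3 + ((a - t) * m - b * u) * v * w + 2 * m * w ^ 3) :
    u * (w * d1 / (v * d2) * (-(b * v ^ 2 * d2) / (m * w ^ 2 * (d1 + d2))) *
        (-(w * (d1 + d2)) / (v * d1))) +
      v * (w * d1 / (v * d2) * (-(b * v ^ 2 * d2) / (m * w ^ 2 * (d1 + d2))) +
        -(b * v ^ 2 * d2) / (m * w ^ 2 * (d1 + d2)) * (-(w * (d1 + d2)) / (v * d1)) +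
        -(w * (d1 + d2)) / (v * d1) * (w * d1 / (v * d2))) +
      w * (w * d1 / (v * d2) + -(b * v ^ 2 * d2) / (m * w ^ 2 * (d1 + d2)) +
        -(w * (d1 + d2)) / (v * d1)) + t = a := by
  set P := w * d1 / (v * d2) with hP
  set Q := -(b * v ^ 2 * d2) / (m * w ^ 2 * (d1 + d2)) with hQ
  set R := -(w * (d1 + d2)) / (v * d1) with hR
  have S1 : u * (P * Q * R) = u * b / m := by
    rw [hP, hQ, hR]; field_simp
  have S2 : v * (P * Q) + w * Q = -(b * v ^ 2) / (m * w) := by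
    rw [hP, hQ]; field_simp; ring
  have S3 : v * (R * P) + w * P = -(w ^ 2) / v := by
    rw [hP, hR]; field_simp; ring
  have S4 : v * (Q * R) + w * R = (d2 - m * w ^ 3) / (m * v * w) := by
    rw [hQ, hR]; field_simp; rw [e1]; ring
  have : u * (P * Q * R) + v * (P * Q + Q * R + R * P) + w * (P + Q + R) + t
      = u * b / m + (-(b * v ^ 2) / (m * w)) + (-(w ^ 2) / v) + (d2 - m * w ^ 3) / (m * v * w) + t := by
    rw [← S1, ← S2, ← S3, ← S4]; ring
  rw [this, e2]; field_simp; ring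

theorem stmt5 (u v w t m a b : ℚ) (hb : b ≠ 0) (hm : m ≠ 0) (hv : v ≠ 0) (hw : w ≠ 0)
    (h1 : b * v ^ 3 - m * w ^ 3 ≠ 0)
    (h2 : b * v ^ 3 + ((a - t) * m - b * u) * v * w + 2 * m * w ^ 3 ≠ 0)
    (h3 : 2 * b * v ^ 3 + ((a - t) * m - b * u) * v * w + m * w ^ 3 ≠ 0) :
    let P := w * (b * v ^ 3 - m * w ^ 3) /
      (v * (b * v ^ 3 + ((a - t) * m - b * u) * v * w + 2 * m * w ^ 3))
    let Q := -(b * v ^ 2 * (b * v ^ 3 + ((a - t) * m - b * u) * v * w + 2 * m * w ^ 3)) /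
      (m * w ^ 2 * (2 * b * v ^ 3 + ((a - t) * m - b * u) * v * w + m * w ^ 3))
    let R := -(w * (2 * b * v ^ 3 + ((a - t) * m - b * u) * v * w + m * w ^ 3)) /
      (v * (b * v ^ 3 - m * w ^ 3))
    u * (P * Q * R) + v * (P * Q + Q * R + R * P) + w * (P + Q + R) + t = a ∧
      m * (P * Q * R) = b := by
  intro P Q R
  have heq : 2 * b * v ^ 3 + ((a - t) * m - b * u) * v * w + m * w ^ 3
      = (b * v ^ 3 - m * w ^ 3) + (b * v ^ 3 + ((a - t) * m - b * u) * v * w + 2 * m * w ^ 3) := by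
    ring
  constructor
  · show _ = _
    simp only [P, Q, R, heq]
    exact aux5 u v w t m a b _ _ hb hm hv hw h1 h2 (heq ▸ h3) rfl rfl
  · show _ = _
    simp only [P, Q, R]
    rw [div_mul_div_comm, div_mul_div_comm, mul_div_assoc', div_eq_iff (mul_ne_zero (mul_ne_zero (mul_ne_zero hv h2) (mul_ne_zero (mul_ne_zero hm (pow_ne_zero 2 hw)) h3)) (mul_ne_zero hv h1))]
    ring
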